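/- Let $V$ be a finite set, let $\pi_0, \ldots, \pi_N$ be strictly positive probability distributions on $V$ with unnormalized versions $\gamma_n = Z_n \pi_n$, and let $P_{F,1}, \ldots, P_{F,N}$ be Markov kernels with strictly positive pushforwards $P_{F,n}\#\pi_{n-1}$. Define backward kernels $P_{B,n}(x \mid y) = \pi_{n-1}(x)P_{F,n}(x,y)/(P_{F,n}\#\pi_{n-1})(y)$ and the work $W(x_{0:N}) = \sum_{n=1}^N [\log(\gamma_{n-1}(x_n)/\gamma_n(x_n)) + \log((P_{F,n}\#\pi_{n-1})(x_n)/\pi_{n-1}(x_n))]$. Then for every path $(x_0, \ldots, x_N)$ with $\prod_n P_{F,n}(x_{n-1},x_n) > 0$, the path-probability ratio satisfies $\frac{\pi_N(x_N)\prod_{n=1}^N P_{B,n}(x_{n-1}\mid x_n)}{\pi_0(x_0)\prod_{n=1}^N P_{F,n}(x_n \mid x_{n-1})} = \exp(-W(x_{0:N}) + \Delta F)$, where $\Delta F = -\log(Z_N/Z_0)$. -/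

import Mathlib

open Finset

/-- Discrete-time Crooks fluctuation theorem on a finite state space. -/
theorem stmt_10 {V : Type*} [Fintype V] (N : ℕ)
    (γ : Fin (N + 1) → V → ℝ) (hγ : ∀ n x, 0 < γ n x)
    (PF : Fin N → V → V → ℝ) (hPF0 : ∀ n x y, 0 ≤ PF n x y)
    (hPFrow : ∀ n x, ∑ y, PF n x y = 1)
    (hpush : ∀ (n : Fin N) (y : V),
      0 < ∑ v, (γ n.castSucc v / ∑ w, γ n.castSucc w) * PF n v y)
    (x : Fin (N + 1) → V)
    (hpath : 0 < ∏ n : Fin N, PF n (x n.castSucc) (x n.succ)) :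
    let Z : Fin (N + 1) → ℝ := fun n => ∑ v, γ n v
    let π : Fin (N + 1) → V → ℝ := fun n v => γ n v / Z n
    let push : Fin N → V → ℝ := fun n y => ∑ v, π n.castSucc v * PF n v y
    let PB : Fin N → V → V → ℝ := fun n a b => π n.castSucc a * PF n a b / push n b
    let W : ℝ := ∑ n : Fin N,
      (Real.log (γ n.castSucc (x n.succ) / γ n.succ (x n.succ)) +
        Real.log (push n (x n.succ) / π n.castSucc (x n.succ)))
    (π (Fin.last N) (x (Fin.last N)) * ∏ n : Fin N, PB n (x n.castSucc) (x n.succ)) /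
        (π 0 (x 0) * ∏ n : Fin N, PF n (x n.castSucc) (x n.succ)) =
      Real.exp (-W + -Real.log (Z (Fin.last N) / Z 0)) := by
  intro Z π push PB W
  have hne : Nonempty V := ⟨x 0⟩
  have hZ : ∀ n, 0 < Z n := fun n => Finset.sum_pos (fun v _ => hγ n v) univ_nonempty
  have hπ : ∀ n v, 0 < π n v := fun n v => div_pos (hγ n v) (hZ n)
  have hq : ∀ (n : Fin N) (y : V), 0 < push n y := fun n y => hpush n y
  -- each exp factor of the RHS
  have hterm : ∀ n : Fin N, Real.exp
      (Real.log (γ n.castSucc (x n.succ) / γ n.succ (x n.succ)) +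
        Real.log (push n (x n.succ) / π n.castSucc (x n.succ))) =
      (Z n.castSucc * push n (x n.succ)) / γ n.succ (x n.succ) := by
    intro n
    rw [Real.exp_add, Real.exp_log (div_pos (hγ _ _) (hγ _ _)),
      Real.exp_log (div_pos (hq n _) (hπ _ _))]
    show γ n.castSucc (x n.succ) / γ n.succ (x n.succ) *
        (push n (x n.succ) / (γ n.castSucc (x n.succ) / Z n.castSucc)) = _
    have h1 := (hγ n.castSucc (x n.succ)).ne'
    have h2 := (hγ n.succ (x n.succ)).ne'
    have h3 := (hZ n.castSucc).ne'
    field_simp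
  have hexp : Real.exp (-W + -Real.log (Z (Fin.last N) / Z 0)) =
      (∏ n : Fin N, γ n.succ (x n.succ)) /
        ((∏ n : Fin N, Z n.castSucc) * ∏ n : Fin N, push n (x n.succ)) *
        (Z 0 / Z (Fin.last N)) := by
    rw [Real.exp_add, Real.exp_neg, Real.exp_neg, Real.exp_log (div_pos (hZ _) (hZ 0)),
      Real.exp_sum, Finset.prod_congr rfl (fun n _ => hterm n), ← Finset.prod_inv_distrib,
      inv_div]
    rw [Finset.prod_congr rfl (fun (n : Fin N) _ => (inv_div _ _ : (Z n.castSucc * push n (x n.succ) / γ n.succ (x n.succ))⁻¹ = _)), Finset.prod_div_distrib, Finset.prod_mul_distrib]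
  rw [hexp]
  have hPBprod : (∏ n : Fin N, PB n (x n.castSucc) (x n.succ)) =
      ((∏ n : Fin N, γ n.castSucc (x n.castSucc) / Z n.castSucc) *
        ∏ n : Fin N, PF n (x n.castSucc) (x n.succ)) / ∏ n : Fin N, push n (x n.succ) := by
    rw [← Finset.prod_mul_distrib, ← Finset.prod_div_distrib]
  rw [hPBprod]
  have htele : γ (Fin.last N) (x (Fin.last N)) * ∏ n : Fin N, γ n.castSucc (x n.castSucc) =
      γ 0 (x 0) * ∏ n : Fin N, γ n.succ (x n.succ) := by
    have h1 := Fin.prod_univ_castSucc (fun n : Fin (N + 1) => γ n (x n))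
    have h2 := Fin.prod_univ_succ (fun n : Fin (N + 1) => γ n (x n))
    rw [mul_comm] at h1
    rw [← h1, h2]
  show γ (Fin.last N) (x (Fin.last N)) / Z (Fin.last N) * _ / (γ 0 (x 0) / Z 0 * _) = _
  rw [Finset.prod_div_distrib]
  have hPFne := hpath.ne'
  have hqne : (∏ n : Fin N, push n (x n.succ)) ≠ 0 :=
    (Finset.prod_pos fun n _ => hq n _).ne'
  have hZcne : (∏ n : Fin N, Z n.castSucc) ≠ 0 :=
    (Finset.prod_pos fun n _ => hZ _).ne'
  have hgc : (∏ n : Fin N, γ n.castSucc (x n.castSucc)) ≠ 0 :=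
    (Finset.prod_pos fun n _ => hγ _ _).ne'
  have hgs : (∏ n : Fin N, γ n.succ (x n.succ)) ≠ 0 :=
    (Finset.prod_pos fun n _ => hγ _ _).ne'
  have hZl := (hZ (Fin.last N)).ne'
  have hZ0 := (hZ 0).ne'
  have hγ0 := (hγ 0 (x 0)).ne'
  have hγl := (hγ (Fin.last N) (x (Fin.last N))).ne'
  field_simp
  linear_combination htele
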